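/- Assume in addition that C is braided monoidal, and suppose there exists a set E of objects of C such that every object of C is isomorphic to a tensor product e_{i_1} ⊗ ⋯ ⊗ e_{i_k} of finitely many objects of E (the empty product being the unit 𝟙). Then for every n ≥ 0 and every F in Fct(C, A), F belongs to VPol_n if and only if for every object e of E one has κ_e(F) = 0 and δ_e(F) ∈ VPol_{n−1}. -/

import Mathlib

open CategoryTheory CategoryTheory.Limits CategoryTheory.MonoidalCategory

variable {C : Type*} [Category C] [MonoidalCategory C]
variable {A : Type*} [Category A] [Abelian A]

/-- The translation endofunctor `τ_x` of `Fct(C, A)`: precomposition with `x ⊗ -`. -/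
noncomputable def tauF (A : Type*) [Category A] (x : C) : (C ⥤ A) ⥤ (C ⥤ A) :=
  (Functor.whiskeringLeft C C A).obj (tensorLeft x)

/-- The component `i_x(F) : F ⟶ τ_x F`, whose component at `c` is
`F` applied to `c ≅ 𝟙 ⊗ c ⟶ x ⊗ c`. -/
def iApp (hI : IsInitial (𝟙_ C)) (x : C) (F : C ⥤ A) : F ⟶ tensorLeft x ⋙ F where
  app c := F.map ((λ_ c).inv ≫ hI.to x ▷ c)
  naturality c c' f := by
    dsimp
    rw [← F.map_comp, ← F.map_comp]
    congr 1
    rw [leftUnitor_inv_naturality_assoc, whisker_exchange, Category.assoc]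

/-- The natural transformation `i_x : Id ⟶ τ_x` of endofunctors of `Fct(C, A)`. -/
noncomputable def iNT (hI : IsInitial (𝟙_ C)) (x : C) :
    𝟭 (C ⥤ A) ⟶ tauF A x where
  app F := iApp hI x F
  naturality F G η := by
    ext c
    exact (η.naturality _).symm

/-- The evanescence endofunctor `κ_x = ker(i_x)` of `Fct(C, A)`. -/
noncomputable def kappaF (hI : IsInitial (𝟙_ C)) (x : C) : (C ⥤ A) ⥤ (C ⥤ A) :=
  kernel (iNT (A := A) hI x)

/-- The difference endofunctor `δ_x = coker(i_x)` of `Fct(C, A)`. -/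
noncomputable def deltaF (hI : IsInitial (𝟙_ C)) (x : C) : (C ⥤ A) ⥤ (C ⥤ A) :=
  cokernel (iNT (A := A) hI x)

/-- `VPolAux hI (n+1) F` says that `F` is very strong polynomial of degree `≤ n`;
`VPolAux hI 0 F` says that `F` is the zero functor (degree `≤ -1`). -/
def VPolAux (hI : IsInitial (𝟙_ C)) : ℕ → (C ⥤ A) → Prop
  | 0 => fun F => IsZero F
  | n + 1 => fun F => ∀ x : C,
      IsZero ((kappaF hI x).obj F) ∧ VPolAux hI n ((deltaF hI x).obj F)

/-- `VPol hI n F` : `F` is very strong polynomial of degree `≤ n`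
(with `VPol_m = {0}` for `m < 0`). -/
def VPol (hI : IsInitial (𝟙_ C)) (n : ℤ) (F : C ⥤ A) : Prop :=
  VPolAux hI (n + 1).toNat F

/-- The iterated tensor product of a list of objects (empty product is the unit). -/
def tensorList : List C → C
  | [] => 𝟙_ C
  | x :: l => x ⊗ tensorList l

namespace VPolProof

variable {𝒜 : Type*} [Category 𝒜] [Abelian 𝒜]

lemma isZero_kernel_of_mono {X Y : 𝒜} (f : X ⟶ Y) [Mono f] : IsZero (kernel f) :=
  IsZero.of_mono_eq_zero (kernel.ι f)
    (by rw [← cancel_mono f, kernel.condition, zero_comp])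

lemma mono_of_isZero_kernel' {X Y : 𝒜} (f : X ⟶ Y) (h : IsZero (kernel f)) : Mono f :=
  Preadditive.mono_of_isZero_kernel f h

lemma isZero_cokernel_of_epi {X Y : 𝒜} (f : X ⟶ Y) [Epi f] : IsZero (cokernel f) :=
  IsZero.of_epi_eq_zero (cokernel.π f)
    (by rw [← cancel_epi f, cokernel.condition, comp_zero])

lemma isZero_kernel_of_isZero {X Y : 𝒜} (f : X ⟶ Y) (h : IsZero X) : IsZero (kernel f) :=
  IsZero.of_mono_eq_zero (kernel.ι f) (h.eq_zero_of_tgt _)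

lemma isZero_cokernel_of_isZero {X Y : 𝒜} (f : X ⟶ Y) (h : IsZero Y) : IsZero (cokernel f) :=
  IsZero.of_epi_eq_zero (cokernel.π f) (h.eq_zero_of_src _)

lemma isZero_X₂ {S : ShortComplex 𝒜} (hS : S.ShortExact) (h₁ : IsZero S.X₁)
    (h₃ : IsZero S.X₃) : IsZero S.X₂ := by
  rw [IsZero.iff_id_eq_zero]
  have hg : 𝟙 S.X₂ ≫ S.g = 0 := by rw [h₃.eq_zero_of_tgt S.g, comp_zero]
  obtain ⟨A', π, hπ, x₁, hx₁⟩ := hS.exact.exact_up_to_refinements (𝟙 S.X₂) hg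
  have hz : x₁ = 0 := h₁.eq_zero_of_tgt x₁
  rw [hz, zero_comp] at hx₁
  exact (cancel_epi π).1 (by simpa using hx₁)

section CokerComp

variable {X Y Z : 𝒜} (f : X ⟶ Y) (g : Y ⟶ Z)

/-- The short complex `coker f ⟶ coker (f ≫ g) ⟶ coker g`. -/
noncomputable def cokerCompSeq : ShortComplex 𝒜 :=
  ShortComplex.mk
    (cokernel.desc f (g ≫ cokernel.π (f ≫ g))
      (by rw [← Category.assoc, cokernel.condition]))
    (cokernel.desc (f ≫ g) (cokernel.π g) (by simp))
    (by
      rw [← cancel_epi (cokernel.π f)]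
      simp)

lemma cokerCompSeq_shortExact [Mono f] [Mono g] : (cokerCompSeq f g).ShortExact := by
  have hmono : Mono (cokerCompSeq f g).f := by
    dsimp [cokerCompSeq]
    apply Preadditive.mono_of_cancel_zero
    intro A a ha
    obtain ⟨A', π, hπ, y, hy⟩ := surjective_up_to_refinements_of_epi (cokernel.π f) a
    have h1 : (y ≫ g) ≫ cokernel.π (f ≫ g) = 0 := by
      have := hy =≫ (cokernel.desc f (g ≫ cokernel.π (f ≫ g))
        (by rw [← Category.assoc, cokernel.condition]))
      simp only [Category.assoc, cokernel.π_desc, ha, comp_zero] at this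
      simpa using this.symm
    obtain ⟨A'', π', hπ', x, hx⟩ :=
      (ShortComplex.exact_cokernel (f ≫ g)).exact_up_to_refinements (y ≫ g) h1
    dsimp at hx
    have hx' : π' ≫ y = x ≫ f := by
      rw [← cancel_mono g]
      simpa [Category.assoc] using hx
    have : π' ≫ π ≫ a = 0 := by
      rw [hy, ← Category.assoc, hx']
      simp
    rw [← cancel_epi π, ← cancel_epi π', comp_zero, comp_zero]
    exact this
  have hepi : Epi (cokerCompSeq f g).g := by
    dsimp [cokerCompSeq]
    exact epi_of_epi_fac (cokernel.π_desc (f ≫ g) (cokernel.π g) (by simp))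
  refine ShortComplex.ShortExact.mk' ?_ hmono hepi
  rw [ShortComplex.exact_iff_exact_up_to_refinements]
  intro A b hb
  dsimp [cokerCompSeq] at b hb ⊢
  obtain ⟨A', π, hπ, z, hz⟩ := surjective_up_to_refinements_of_epi (cokernel.π (f ≫ g)) b
  have h1 : z ≫ cokernel.π g = 0 := by
    have := hz =≫ (cokernel.desc (f ≫ g) (cokernel.π g) (by simp))
    simp only [Category.assoc, cokernel.π_desc, hb, comp_zero] at this
    exact this.symm.trans comp_zero
  obtain ⟨A'', π', hπ', y, hy⟩ :=
    (ShortComplex.exact_cokernel g).exact_up_to_refinements z h1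
  dsimp at hy
  refine ⟨A'', π' ≫ π, epi_comp _ _, y ≫ cokernel.π f, ?_⟩
  rw [Category.assoc, hz, ← Category.assoc, hy]
  simp [Category.assoc]

end CokerComp

section SnakeLike

variable {S₁ S₂ : ShortComplex 𝒜} (φ : S₁ ⟶ S₂)

lemma mono_tau₂ (h₁ : S₁.ShortExact) (h₂ : S₂.ShortExact)
    (m₁ : Mono φ.τ₁) (m₃ : Mono φ.τ₃) : Mono φ.τ₂ := by
  have := h₂.mono_f
  apply Preadditive.mono_of_cancel_zero
  intro A a ha
  have hag : a ≫ S₁.g = 0 := by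
    rw [← cancel_mono φ.τ₃, Category.assoc, ← φ.comm₂₃, ← Category.assoc, ha]
    simp
  obtain ⟨A', π, hπ, x₁, hx₁⟩ := h₁.exact.exact_up_to_refinements a hag
  have h0 : x₁ ≫ φ.τ₁ = 0 := by
    rw [← cancel_mono S₂.f, Category.assoc, φ.comm₁₂, zero_comp,
      ← Category.assoc, ← hx₁, Category.assoc, ha, comp_zero]
  have hx₁0 : x₁ = 0 := by rwa [← cancel_mono φ.τ₁, zero_comp]
  rw [← cancel_epi π, comp_zero, hx₁, hx₁0, zero_comp]

/-- The short complex of cokernels induced by a morphism of short complexes. -/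
noncomputable def cokerSeq : ShortComplex 𝒜 :=
  ShortComplex.mk
    (cokernel.map φ.τ₁ φ.τ₂ S₁.f S₂.f φ.comm₁₂)
    (cokernel.map φ.τ₂ φ.τ₃ S₁.g S₂.g φ.comm₂₃)
    (by
      rw [← cancel_epi (cokernel.π φ.τ₁)]
      simp)

lemma cokerSeq_shortExact (h₁ : S₁.ShortExact) (h₂ : S₂.ShortExact)
    (m₁ : Mono φ.τ₁) (m₃ : Mono φ.τ₃) : (cokerSeq φ).ShortExact := by
  have := h₂.mono_f
  have := h₁.epi_g
  have := h₂.epi_g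
  have hmono : Mono (cokerSeq φ).f := by
    dsimp [cokerSeq]
    apply Preadditive.mono_of_cancel_zero
    intro A a ha
    obtain ⟨A', π, hπ, y₁, hy₁⟩ := surjective_up_to_refinements_of_epi (cokernel.π φ.τ₁) a
    have h1 : (y₁ ≫ S₂.f) ≫ cokernel.π φ.τ₂ = 0 := by
      have := hy₁ =≫ cokernel.map φ.τ₁ φ.τ₂ S₁.f S₂.f φ.comm₁₂
      simp only [Category.assoc, ha, comp_zero, cokernel.π_desc, cokernel.map] at this
      simpa [Category.assoc] using this.symm
    obtain ⟨A'', π', hπ', x₂, hx₂⟩ :=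
      (ShortComplex.exact_cokernel φ.τ₂).exact_up_to_refinements (y₁ ≫ S₂.f) h1
    dsimp at hx₂
    have h2 : x₂ ≫ S₁.g = 0 := by
      rw [← cancel_mono φ.τ₃, Category.assoc, ← φ.comm₂₃, ← Category.assoc, ← hx₂]
      simp
    obtain ⟨A''', π'', hπ'', x₁, hx₁⟩ := h₁.exact.exact_up_to_refinements x₂ h2
    have h3 : π'' ≫ π' ≫ y₁ = x₁ ≫ φ.τ₁ := by
      rw [← cancel_mono S₂.f]
      simp only [Category.assoc]
      rw [hx₂, φ.comm₁₂, ← Category.assoc, ← Category.assoc, hx₁]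
    have hfin : π'' ≫ π' ≫ π ≫ a = 0 := by
      rw [hy₁, show π'' ≫ π' ≫ y₁ ≫ cokernel.π φ.τ₁
          = (π'' ≫ π' ≫ y₁) ≫ cokernel.π φ.τ₁ by simp only [Category.assoc], h3,
        Category.assoc, cokernel.condition, comp_zero]
    rw [← cancel_epi π, ← cancel_epi π', ← cancel_epi π'', comp_zero, comp_zero, comp_zero]
    exact hfin
  have hepi : Epi (cokerSeq φ).g := by
    dsimp [cokerSeq]
    have : S₂.g ≫ cokernel.π φ.τ₃ = cokernel.π φ.τ₂ ≫ cokernel.map φ.τ₂ φ.τ₃ S₁.g S₂.g φ.comm₂₃ := by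
      simp [cokernel.map]
    exact epi_of_epi_fac this.symm
  refine ShortComplex.ShortExact.mk' ?_ hmono hepi
  rw [ShortComplex.exact_iff_exact_up_to_refinements]
  intro A b hb
  dsimp [cokerSeq] at b hb ⊢
  obtain ⟨A', π, hπ, y₂, hy₂⟩ := surjective_up_to_refinements_of_epi (cokernel.π φ.τ₂) b
  have h1 : (y₂ ≫ S₂.g) ≫ cokernel.π φ.τ₃ = 0 := by
    have := hy₂ =≫ cokernel.map φ.τ₂ φ.τ₃ S₁.g S₂.g φ.comm₂₃
    simp only [Category.assoc, hb, comp_zero, cokernel.π_desc, cokernel.map] at this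
    simpa [Category.assoc] using this.symm.trans comp_zero
  obtain ⟨A'', π', hπ', x₃, hx₃⟩ :=
    (ShortComplex.exact_cokernel φ.τ₃).exact_up_to_refinements (y₂ ≫ S₂.g) h1
  dsimp at hx₃
  obtain ⟨A''', π'', hπ'', x₂, hx₂⟩ := surjective_up_to_refinements_of_epi S₁.g x₃
  have h2 : ((π'' ≫ π') ≫ y₂ - x₂ ≫ φ.τ₂) ≫ S₂.g = 0 := by
    rw [Preadditive.sub_comp]
    have e1 : ((π'' ≫ π') ≫ y₂) ≫ S₂.g = π'' ≫ (x₃ ≫ φ.τ₃) := by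
      simp only [Category.assoc]
      rw [← hx₃, ← Category.assoc]
    have e2 : (x₂ ≫ φ.τ₂) ≫ S₂.g = π'' ≫ x₃ ≫ φ.τ₃ := by
      rw [Category.assoc, φ.comm₂₃, ← Category.assoc, ← hx₂, Category.assoc]
    rw [e1, e2, sub_self]
  obtain ⟨B, ρ, hρ, y₁, hy₁⟩ := h₂.exact.exact_up_to_refinements _ h2
  refine ⟨B, ρ ≫ (π'' ≫ π') ≫ π, inferInstance, y₁ ≫ cokernel.π φ.τ₁, ?_⟩
  have : (ρ ≫ (π'' ≫ π') ≫ π) ≫ b = ρ ≫ ((π'' ≫ π') ≫ y₂) ≫ cokernel.π φ.τ₂ := by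
    simp only [Category.assoc]
    rw [hy₂]
  rw [this]
  have hstep : ρ ≫ ((π'' ≫ π') ≫ y₂) ≫ cokernel.π φ.τ₂
      = ρ ≫ ((π'' ≫ π') ≫ y₂ - x₂ ≫ φ.τ₂) ≫ cokernel.π φ.τ₂ := by
    rw [Preadditive.sub_comp]
    simp [cokernel.condition]
  rw [hstep, ← Category.assoc, hy₁, Category.assoc]
  simp [cokernel.map]

end SnakeLike

end VPolProof
section MonoidalPart

open CategoryTheory CategoryTheory.Limits CategoryTheory.MonoidalCategory

variable {C : Type*} [Category C] [MonoidalCategory C]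
variable {A : Type*} [Category A] [Abelian A]

namespace VPolProof

/-- `τ_x F ≅ τ_y F` induced by `e : x ≅ y`. -/
noncomputable def tauIso {x y : C} (e : x ≅ y) (F : C ⥤ A) :
    tensorLeft x ⋙ F ≅ tensorLeft y ⋙ F :=
  NatIso.ofComponents (fun c => F.mapIso (whiskerRightIso e c)) (by
    intro c c' f
    dsimp
    rw [← F.map_comp, ← F.map_comp, whiskerRightIso_hom, whiskerRightIso_hom, whisker_exchange])

lemma iApp_comp_tauIso (hI : IsInitial (𝟙_ C)) {x y : C} (e : x ≅ y) (F : C ⥤ A) :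
    iApp hI x F ≫ (tauIso e F).hom = iApp hI y F := by
  ext c
  dsimp [tauIso, iApp]
  rw [← F.map_comp]
  congr 1
  rw [Category.assoc, whiskerRightIso_hom, ← comp_whiskerRight]
  congr 2
  exact hI.hom_ext _ _

/-- `τ_y (τ_x F) ≅ τ_{x ⊗ y} F`. -/
noncomputable def assocIso (x y : C) (F : C ⥤ A) :
    tensorLeft y ⋙ tensorLeft x ⋙ F ≅ tensorLeft (x ⊗ y) ⋙ F :=
  NatIso.ofComponents (fun c => F.mapIso (α_ x y c).symm) (by
    intro c c' f
    dsimp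
    rw [← F.map_comp, ← F.map_comp, associator_inv_naturality_right])

lemma iApp_tensor (hI : IsInitial (𝟙_ C)) (x y : C) (F : C ⥤ A) :
    iApp hI (x ⊗ y) F =
      iApp hI x F ≫ iApp hI y (tensorLeft x ⋙ F) ≫ (assocIso x y F).hom := by
  ext c
  dsimp [assocIso, iApp]
  rw [← F.map_comp, ← F.map_comp]
  congr 1
  symm
  rw [MonoidalCategory.whiskerLeft_comp]
  simp only [Category.assoc]
  rw [associator_inv_naturality_middle, triangle_assoc_comp_left_inv_assoc,
    ← comp_whiskerRight, ← comp_whiskerRight]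
  congr 2
  exact hI.hom_ext _ _

variable [BraidedCategory C]

/-- `τ_x (τ_z F) ≅ τ_z (τ_x F)`, using the braiding. -/
noncomputable def braidIso (z x : C) (F : C ⥤ A) :
    tensorLeft x ⋙ tensorLeft z ⋙ F ≅ tensorLeft z ⋙ tensorLeft x ⋙ F :=
  NatIso.ofComponents
    (fun c => F.mapIso ((α_ z x c).symm ≪≫ whiskerRightIso (β_ z x) c ≪≫ α_ x z c))
    (by
      intro c c' f
      dsimp
      rw [← F.map_comp, ← F.map_comp]
      congr 1
      rw [associator_inv_naturality_right_assoc, whiskerRightIso_hom, whiskerRightIso_hom, whisker_exchange_assoc,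
        associator_naturality_right]
      simp only [Category.assoc])

lemma iApp_whiskerLeft (hI : IsInitial (𝟙_ C)) (z x : C) (F : C ⥤ A) :
    iApp hI x (tensorLeft z ⋙ F) ≫ (braidIso z x F).hom =
      Functor.whiskerLeft (tensorLeft z) (iApp hI x F) := by
  ext c
  dsimp [braidIso, iApp]
  rw [← F.map_comp]
  congr 1
  -- goal : z ◁ ((λ_ c).inv ≫ hI.to x ▷ c) ≫ (α_ z x c).inv ≫ (β_ z x).hom ▷ c ≫ (α_ x z c).hom
  --        = (λ_ (z ⊗ c)).inv ≫ hI.to x ▷ (z ⊗ c)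
  rw [MonoidalCategory.whiskerLeft_comp]
  simp only [Category.assoc]
  rw [associator_inv_naturality_middle_assoc, triangle_assoc_comp_left_inv_assoc,
    ← comp_whiskerRight_assoc]
  have key : ((ρ_ z).inv ≫ z ◁ hI.to x) ≫ (β_ z x).hom = (λ_ z).inv ≫ hI.to x ▷ z := by
    rw [Category.assoc, BraidedCategory.braiding_naturality_right, ← Category.assoc]
    congr 1
    rw [Iso.inv_comp_eq, Iso.eq_comp_inv, braiding_leftUnitor]
  rw [whiskerRightIso_hom, ← comp_whiskerRight_assoc, key, comp_whiskerRight]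
  simp only [Category.assoc]
  rw [associator_naturality_left, leftUnitor_inv_whiskerRight_assoc, Iso.inv_hom_id_assoc]

end VPolProof
end MonoidalPart
section GluePart

open CategoryTheory CategoryTheory.Limits CategoryTheory.MonoidalCategory

variable {C : Type*} [Category C] [MonoidalCategory C]
variable {A : Type*} [Category A] [Abelian A]

namespace VPolProof

variable (hI : IsInitial (𝟙_ C))

/-- Evaluating the evanescence functor. -/
noncomputable def kappaObjIso (x : C) (F : C ⥤ A) :
    (kappaF (A := A) hI x).obj F ≅ kernel (iApp hI x F) :=
  PreservesKernel.iso ((evaluation (C ⥤ A) (C ⥤ A)).obj F) (iNT (A := A) hI x)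

/-- Evaluating the difference functor. -/
noncomputable def deltaObjIso (x : C) (F : C ⥤ A) :
    (deltaF (A := A) hI x).obj F ≅ cokernel (iApp hI x F) :=
  PreservesCokernel.iso ((evaluation (C ⥤ A) (C ⥤ A)).obj F) (iNT (A := A) hI x)

lemma vpolAux_of_iso : ∀ (n : ℕ) {F G : C ⥤ A}, (F ≅ G) → VPolAux hI n F → VPolAux hI n G
  | 0, _, _, e, h => h.of_iso e.symm
  | n+1, _, _, e, h => fun x =>
      ⟨(h x).1.of_iso ((kappaF hI x).mapIso e.symm),
       vpolAux_of_iso n ((deltaF hI x).mapIso e) (h x).2⟩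

lemma vpolAux_succ_iff (n : ℕ) (F : C ⥤ A) :
    VPolAux hI (n + 1) F ↔
      ∀ x : C, Mono (iApp hI x F) ∧ VPolAux hI n (cokernel (iApp hI x F)) := by
  constructor
  · intro h x
    refine ⟨mono_of_isZero_kernel' _ (((h x).1).of_iso (kappaObjIso hI x F).symm), ?_⟩
    exact vpolAux_of_iso hI n (deltaObjIso hI x F) (h x).2
  · intro h x
    have := (h x).1
    refine ⟨(isZero_kernel_of_mono (iApp hI x F)).of_iso (kappaObjIso hI x F), ?_⟩
    exact vpolAux_of_iso hI n (deltaObjIso hI x F).symm (h x).2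

lemma vpolAux_of_isZero : ∀ (n : ℕ) {F : C ⥤ A}, IsZero F → VPolAux hI n F
  | 0, _, h => h
  | n+1, F, h => fun x => by
    have hτ : IsZero (tensorLeft x ⋙ F) :=
      Functor.isZero _ fun c => (F.isZero_iff.mp h) _
    exact ⟨(isZero_kernel_of_isZero _ h).of_iso (kappaObjIso hI x F),
      vpolAux_of_isZero n ((isZero_cokernel_of_isZero _ hτ).of_iso (deltaObjIso hI x F))⟩

variable [BraidedCategory C]

lemma vpolAux_whisker : ∀ (n : ℕ) (z : C) {F : C ⥤ A},
    VPolAux hI n F → VPolAux hI n (tensorLeft z ⋙ F)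
  | 0, z, F, h => Functor.isZero _ fun c => (F.isZero_iff.mp h) _
  | n+1, z, F, h => by
    rw [vpolAux_succ_iff] at h ⊢
    intro x
    obtain ⟨hm, hd⟩ := h x
    haveI hwm : Mono (Functor.whiskerLeft (tensorLeft z) (iApp hI x F)) := by
      rw [NatTrans.mono_iff_mono_app] at hm ⊢
      intro c
      exact hm _
    have heq : iApp hI x (tensorLeft z ⋙ F)
        = Functor.whiskerLeft (tensorLeft z) (iApp hI x F) ≫ (braidIso z x F).inv := by
      rw [← iApp_whiskerLeft hI z x F]
      simp
    constructor
    · rw [heq]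
      exact mono_comp _ _
    · have e1 : cokernel (iApp hI x (tensorLeft z ⋙ F)) ≅
          cokernel (Functor.whiskerLeft (tensorLeft z) (iApp hI x F)) :=
        cokernel.mapIso _ _ (Iso.refl _) (braidIso z x F)
          (by rw [iApp_whiskerLeft hI z x F]; simp)
      have e2 : cokernel (Functor.whiskerLeft (tensorLeft z) (iApp hI x F)) ≅
          tensorLeft z ⋙ cokernel (iApp hI x F) :=
        (PreservesCokernel.iso ((Functor.whiskeringLeft C C A).obj (tensorLeft z)) (iApp hI x F)).symm
      exact vpolAux_of_iso hI n (e1 ≪≫ e2).symm (vpolAux_whisker n z hd)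

lemma vpolAux_of_shortExact : ∀ (n : ℕ) (S : ShortComplex (C ⥤ A)),
    S.ShortExact → VPolAux hI n S.X₁ → VPolAux hI n S.X₃ → VPolAux hI n S.X₂
  | 0, _, hS, h₁, h₃ => isZero_X₂ hS h₁ h₃
  | n+1, S, hS, h₁, h₃ => by
    rw [vpolAux_succ_iff] at h₁ h₃ ⊢
    intro x
    letI G := (Functor.whiskeringLeft C C A).obj (tensorLeft x)
    haveI : G.Additive := ⟨by intros; ext c; rfl⟩
    haveI : PreservesFiniteLimits G := ⟨fun J _ _ => inferInstance⟩
    haveI : PreservesFiniteColimits G := ⟨fun J _ _ => inferInstance⟩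
    have hS' : (S.map G).ShortExact := hS.map_of_exact G
    let φ : S ⟶ S.map G :=
      { τ₁ := iApp hI x S.X₁
        τ₂ := iApp hI x S.X₂
        τ₃ := iApp hI x S.X₃
        comm₁₂ := by exact ((iNT (A := A) hI x).naturality S.f).symm
        comm₂₃ := by exact ((iNT (A := A) hI x).naturality S.g).symm }
    have m1 : Mono φ.τ₁ := (h₁ x).1
    have m3 : Mono φ.τ₃ := (h₃ x).1
    refine ⟨mono_tau₂ φ hS hS' m1 m3, ?_⟩
    exact vpolAux_of_shortExact n (cokerSeq φ) (cokerSeq_shortExact φ hS hS' m1 m3)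
      (h₁ x).2 (h₃ x).2

end VPolProof
end GluePart
section FinalPart

open CategoryTheory CategoryTheory.Limits CategoryTheory.MonoidalCategory

variable {C : Type*} [Category C] [MonoidalCategory C]
variable {A : Type*} [Category A] [Abelian A]

namespace VPolProof

variable (hI : IsInitial (𝟙_ C))

lemma iApp_unit_isIso (F : C ⥤ A) : IsIso (iApp hI (𝟙_ C) F) := by
  have h : hI.to (𝟙_ C) = 𝟙 (𝟙_ C) := hI.hom_ext _ _
  haveI : ∀ c : C, IsIso ((iApp hI (𝟙_ C) F).app c) := by
    intro c
    show IsIso (F.map ((λ_ c).inv ≫ hI.to (𝟙_ C) ▷ c))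
    rw [h]
    simp only [MonoidalCategory.id_whiskerRight, Category.comp_id]
    infer_instance
  exact NatIso.isIso_of_isIso_app _

variable [BraidedCategory C]

lemma main_list (n : ℕ) (E : Set C) :
    ∀ (l : List C), (∀ e ∈ l, e ∈ E) → ∀ (F : C ⥤ A),
      (∀ e ∈ E, Mono (iApp hI e F) ∧ VPolAux hI n (cokernel (iApp hI e F))) →
      Mono (iApp hI (tensorList l) F) ∧ VPolAux hI n (cokernel (iApp hI (tensorList l) F))
  | [], _, F, _ => by
    haveI := iApp_unit_isIso hI F
    have h1 : Mono (iApp hI (tensorList []) F) := by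
      show Mono (iApp hI (𝟙_ C) F)
      infer_instance
    have h2 : IsZero (cokernel (iApp hI (tensorList []) F)) := by
      show IsZero (cokernel (iApp hI (𝟙_ C) F))
      exact isZero_cokernel_of_epi _
    exact ⟨h1, vpolAux_of_isZero hI n h2⟩
  | e :: l, hl, F, hF => by
    have he : e ∈ E := hl e (by simp)
    obtain ⟨hm_e, hd_e⟩ := hF e he
    have hFe : ∀ e' ∈ E, Mono (iApp hI e' (tensorLeft e ⋙ F)) ∧
        VPolAux hI n (cokernel (iApp hI e' (tensorLeft e ⋙ F))) := by
      intro e' he'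
      obtain ⟨hm', hd'⟩ := hF e' he'
      haveI hwm : Mono (Functor.whiskerLeft (tensorLeft e) (iApp hI e' F)) := by
        rw [NatTrans.mono_iff_mono_app] at hm' ⊢
        intro c
        exact hm' _
      have heq : iApp hI e' (tensorLeft e ⋙ F)
          = Functor.whiskerLeft (tensorLeft e) (iApp hI e' F) ≫ (braidIso e e' F).inv := by
        rw [← iApp_whiskerLeft hI e e' F]
        simp
      constructor
      · rw [heq]
        exact mono_comp _ _
      · have e1 : cokernel (iApp hI e' (tensorLeft e ⋙ F)) ≅
            cokernel (Functor.whiskerLeft (tensorLeft e) (iApp hI e' F)) :=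
          cokernel.mapIso _ _ (Iso.refl _) (braidIso e e' F)
            (by rw [iApp_whiskerLeft hI e e' F]; simp)
        have e2 : cokernel (Functor.whiskerLeft (tensorLeft e) (iApp hI e' F)) ≅
            tensorLeft e ⋙ cokernel (iApp hI e' F) :=
          (PreservesCokernel.iso ((Functor.whiskeringLeft C C A).obj (tensorLeft e)) (iApp hI e' F)).symm
        exact vpolAux_of_iso hI n (e1 ≪≫ e2).symm (vpolAux_whisker hI n e hd')
    obtain ⟨hm_t, hd_t⟩ :=
      main_list n E l (fun e' h => hl e' (by simp [h])) (tensorLeft e ⋙ F) hFe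
    have heq := iApp_tensor hI e (tensorList l) F
    haveI := hm_e
    haveI := hm_t
    haveI hg : Mono (iApp hI (tensorList l) (tensorLeft e ⋙ F)
        ≫ (assocIso e (tensorList l) F).hom) := mono_comp _ _
    constructor
    · show Mono (iApp hI (e ⊗ tensorList l) F)
      rw [heq]
      exact mono_comp _ _
    · have hses := cokerCompSeq_shortExact (iApp hI e F)
        (iApp hI (tensorList l) (tensorLeft e ⋙ F) ≫ (assocIso e (tensorList l) F).hom)
      have hX₃ : VPolAux hI n (cokernel (iApp hI (tensorList l) (tensorLeft e ⋙ F)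
          ≫ (assocIso e (tensorList l) F).hom)) := by
        have e3 : cokernel (iApp hI (tensorList l) (tensorLeft e ⋙ F)
            ≫ (assocIso e (tensorList l) F).hom)
            ≅ cokernel (iApp hI (tensorList l) (tensorLeft e ⋙ F)) :=
          cokernel.mapIso _ _ (Iso.refl _) (assocIso e (tensorList l) F).symm (by simp)
        exact vpolAux_of_iso hI n e3.symm hd_t
      show VPolAux hI n (cokernel (iApp hI (e ⊗ tensorList l) F))
      rw [heq]
      exact vpolAux_of_shortExact hI n _ hses hd_e hX₃

end VPolProof
end FinalPart
/-- If every object of `C` is isomorphic to a finite tensor product of objects in `E`,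
then `F ∈ VPol_n` iff `κ_e F = 0` and `δ_e F ∈ VPol_{n-1}` for every `e ∈ E`. -/
theorem vpol_iff_generators [BraidedCategory C] (hI : IsInitial (𝟙_ C)) (E : Set C)
    (hE : ∀ m : C, ∃ l : List C, (∀ e ∈ l, e ∈ E) ∧ Nonempty (m ≅ tensorList l))
    (n : ℕ) (F : C ⥤ A) :
    VPol hI n F ↔ ∀ e ∈ E,
      IsZero ((kappaF hI e).obj F) ∧ VPol hI ((n : ℤ) - 1) ((deltaF hI e).obj F) := by
  have hn1 : ((n : ℤ) + 1).toNat = n + 1 := by omega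
  have hn2 : ((n : ℤ) - 1 + 1).toNat = n := by omega
  have hVP : ∀ (G : C ⥤ A), VPol hI ((n : ℤ) - 1) G ↔ VPolAux hI n G := by
    intro G
    unfold VPol
    rw [hn2]
  have hVP' : VPol hI n F ↔ VPolAux hI (n + 1) F := by
    unfold VPol
    rw [hn1]
  rw [hVP']
  simp only [hVP]
  constructor
  · intro h e _
    exact h e
  · intro h
    rw [VPolProof.vpolAux_succ_iff]
    have hgen : ∀ e ∈ E, Mono (iApp hI e F) ∧ VPolAux hI n (cokernel (iApp hI e F)) := by
      intro e he
      obtain ⟨h1, h2⟩ := h e he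
      exact ⟨VPolProof.mono_of_isZero_kernel' _
          (h1.of_iso (VPolProof.kappaObjIso hI e F).symm),
        VPolProof.vpolAux_of_iso hI n (VPolProof.deltaObjIso hI e F) h2⟩
    intro x
    obtain ⟨l, hl, ⟨ex⟩⟩ := hE x
    obtain ⟨hm, hd⟩ := VPolProof.main_list hI n E l hl F hgen
    have heq : iApp hI x F ≫ (VPolProof.tauIso ex F).hom = iApp hI (tensorList l) F :=
      VPolProof.iApp_comp_tauIso hI ex F
    constructor
    · haveI : Mono (iApp hI x F ≫ (VPolProof.tauIso ex F).hom) := by rw [heq]; exact hm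
      exact mono_of_mono _ (VPolProof.tauIso ex F).hom
    · have e4 : cokernel (iApp hI x F) ≅ cokernel (iApp hI (tensorList l) F) :=
        cokernel.mapIso _ _ (Iso.refl F) (VPolProof.tauIso ex F) (by rw [heq]; simp)
      exact VPolProof.vpolAux_of_iso hI n e4.symm hd
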